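/- In Euclidean m-space with two agents, let f be a deterministic, unanimous, translation-invariant, strategyproof mechanism, and assume the established structural facts: moving an agent along the segment toward the output preserves the output (Lemma 2), and the output always lies on the sphere with the two agents' segment as diameter (Theorem 2). Then f is scalable: f(kA, kB) = k·f(A, B) for all k > 0 and all A, B ∈ ℝ^m. -/

import Mathlib

/-- A deterministic, unanimous, translation-invariant, strategyproof
two-agent mechanism in Euclidean m-space — given that moving an agent along the
segment toward the output preserves the output, and that the output lies on the
sphere with the agents' segment as diameter — is scalable. -/
theorem stmt17 {m : ℕ}
    (f : EuclideanSpace ℝ (Fin m) → EuclideanSpace ℝ (Fin m) → EuclideanSpace ℝ (Fin m))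
    (hsp1 : ∀ A A' B, ‖f A B - A‖ ≤ ‖f A' B - A‖)
    (hsp2 : ∀ A B B', ‖f A B - B‖ ≤ ‖f A B' - B‖)
    (huna : ∀ C, f C C = C)
    (htrans : ∀ A B t, f (A + t) (B + t) = f A B + t)
    (hseg1 : ∀ A B P, P ∈ segment ℝ A (f A B) → f P B = f A B)
    (hseg2 : ∀ A B P, P ∈ segment ℝ B (f A B) → f A P = f A B)
    (hsphere : ∀ A B, (inner ℝ (A - f A B) (B - f A B) : ℝ) = 0) :
    ∀ (k : ℝ), 0 < k → ∀ A B, f (k • A) (k • B) = k • f A B := by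
  -- Key step: scaling at the origin, for 0 < k < 1.
  have key : ∀ k : ℝ, 0 < k → k < 1 → ∀ C, f 0 (k • C) = k • f 0 C := by
    intro k hk hk1 C
    set W := f 0 C with hW
    -- Move agent A from 0 to (1-k)•W along the segment [0, W].
    have h1 : f ((1 - k) • W) C = W := by
      apply hseg1 0 C
      exact ⟨k, 1 - k, le_of_lt hk, by linarith, by ring, by simp [hW]⟩
    -- Move agent B from C to k•C + (1-k)•W along the segment [C, W].
    have h2 : f ((1 - k) • W) (k • C + (1 - k) • W) = W := by
      have := hseg2 ((1 - k) • W) C (k • C + (1 - k) • W)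
      rw [h1] at this
      exact this ⟨k, 1 - k, le_of_lt hk, by linarith, by ring, rfl⟩
    -- Translate by -(1-k)•W.
    have h3 := htrans 0 (k • C) ((1 - k) • W)
    rw [zero_add] at h3
    rw [h3] at h2
    have : k • W = W - (1 - k) • W := by
      rw [sub_smul, one_smul]; abel
    rw [this]
    exact eq_sub_of_add_eq h2
  -- Scaling at the origin, for all k > 0.
  have key' : ∀ k : ℝ, 0 < k → ∀ C, f 0 (k • C) = k • f 0 C := by
    intro k hk C
    rcases lt_trichotomy k 1 with h | h | h
    · exact key k hk h C
    · simp [h]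
    · have hinv : (0:ℝ) < 1 / k := by positivity
      have hinv1 : 1 / k < 1 := by
        rw [div_lt_one hk]; linarith
      have := key (1 / k) hinv hinv1 (k • C)
      rw [smul_smul, one_div_mul_cancel (ne_of_gt hk), one_smul] at this
      have h2 : k • f 0 C = k • ((1 / k) • f 0 (k • C)) := by rw [this]
      rw [smul_smul, mul_one_div_cancel (ne_of_gt hk), one_smul] at h2
      exact h2.symm
  -- General case via translation invariance.
  intro k hk A B
  have e1 : k • B - k • A + k • A = k • B := by abel
  have e2 : B - A + A = B := by abel
  have t1 : f (k • A) (k • B) = f 0 (k • B - k • A) + k • A := by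
    have := htrans 0 (k • B - k • A) (k • A)
    rw [zero_add, e1] at this
    exact this
  have t2 : f A B = f 0 (B - A) + A := by
    have := htrans 0 (B - A) A
    rw [zero_add, e2] at this
    exact this
  rw [t1, t2, ← smul_sub, key' k hk, smul_add]
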